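/- Let X and Y be Banach spaces. If (X* × Y, K) has property L_{o,o} for bilinear forms, then every nuclear operator from X into Y can be approximated in the nuclear norm by nuclear operators which attain their nuclear norm; that is, NA_N(X, Y) is ‖·‖_N-dense in N(X, Y). -/

import Mathlib

noncomputable section

open scoped BigOperators

/-- `r` is the value `∑ₙ ‖x*ₙ‖‖yₙ‖` of a nuclear representation `T = ∑ₙ x*ₙ ⊗ yₙ`,
i.e. `T x = ∑ₙ x*ₙ(x) yₙ` with `∑ₙ ‖x*ₙ‖‖yₙ‖ < ∞`. -/
def IsNuclearRep {X Y : Type*} [NormedAddCommGroup X] [NormedSpace ℝ X]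
    [NormedAddCommGroup Y] [NormedSpace ℝ Y]
    (T : X →L[ℝ] Y) (r : ℝ) : Prop :=
  ∃ (f : ℕ → (X →L[ℝ] ℝ)) (y : ℕ → Y),
    Summable (fun n => ‖f n‖ * ‖y n‖) ∧
    (∀ x : X, HasSum (fun n => f n x • y n) (T x)) ∧
    r = ∑' n, ‖f n‖ * ‖y n‖

/-- `T` is a nuclear operator. -/
def IsNuclearOp {X Y : Type*} [NormedAddCommGroup X] [NormedSpace ℝ X]
    [NormedAddCommGroup Y] [NormedSpace ℝ Y] (T : X →L[ℝ] Y) : Prop :=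
  ∃ r : ℝ, IsNuclearRep T r

/-- The nuclear norm `‖T‖_N = inf {∑ₙ ‖x*ₙ‖‖yₙ‖ : T = ∑ₙ x*ₙ ⊗ yₙ}`. -/
def nuclearNorm {X Y : Type*} [NormedAddCommGroup X] [NormedSpace ℝ X]
    [NormedAddCommGroup Y] [NormedSpace ℝ Y] (T : X →L[ℝ] Y) : ℝ :=
  sInf {r : ℝ | IsNuclearRep T r}

/-- `T` attains its nuclear norm: some nuclear representation realizes `‖T‖_N`. -/
def AttainsNuclearNorm {X Y : Type*} [NormedAddCommGroup X] [NormedSpace ℝ X]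
    [NormedAddCommGroup Y] [NormedSpace ℝ Y] (T : X →L[ℝ] Y) : Prop :=
  IsNuclearRep T (nuclearNorm T)

/-- `(X × Y, ℝ)` has property L_{o,o} for bilinear forms. -/
def BilinLoo (X Y : Type*) [NormedAddCommGroup X] [NormedSpace ℝ X]
    [NormedAddCommGroup Y] [NormedSpace ℝ Y] : Prop :=
  ∀ B : X →L[ℝ] Y →L[ℝ] ℝ, ‖B‖ = 1 → ∀ ε : ℝ, 0 < ε → ∃ η : ℝ, 0 < η ∧
    ∀ (x : X) (y : Y), ‖x‖ = 1 → ‖y‖ = 1 → 1 - η < |B x y| →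
      ∃ (x₀ : X) (y₀ : Y), ‖x₀‖ = 1 ∧ ‖y₀‖ = 1 ∧ |B x₀ y₀| = 1 ∧
        ‖x - x₀‖ < ε ∧ ‖y - y₀‖ < ε

section Aux

variable {X Y : Type*} [NormedAddCommGroup X] [NormedSpace ℝ X]
  [NormedAddCommGroup Y] [NormedSpace ℝ Y]

lemma le_of_forall_pos_le_add' {a b : ℝ} (h : ∀ ε : ℝ, 0 < ε → a ≤ b + ε) : a ≤ b := by
  by_contra hc
  push_neg at hc
  have := h ((a - b) / 2) (by linarith)
  linarith

lemma IsNuclearRep.nonneg {T : X →L[ℝ] Y} {r : ℝ} (h : IsNuclearRep T r) : 0 ≤ r := by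
  obtain ⟨f, y, hs, -, rfl⟩ := h
  exact tsum_nonneg fun n => mul_nonneg (norm_nonneg _) (norm_nonneg _)

lemma bddBelow_rep (T : X →L[ℝ] Y) : BddBelow {r | IsNuclearRep T r} :=
  ⟨0, fun _ hr => hr.nonneg⟩

lemma nuclearNorm_le_of_rep {T : X →L[ℝ] Y} {r : ℝ} (h : IsNuclearRep T r) :
    nuclearNorm T ≤ r := csInf_le (bddBelow_rep T) h

lemma nuclearNorm_nonneg' (T : X →L[ℝ] Y) : 0 ≤ nuclearNorm T :=
  Real.sInf_nonneg fun _ hr => hr.nonneg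

lemma isNuclearRep_zero : IsNuclearRep (0 : X →L[ℝ] Y) 0 := by
  refine ⟨0, 0, ?_, ?_, ?_⟩
  · simpa using summable_zero
  · intro x
    simpa using hasSum_zero
  · simp

lemma nuclearNorm_zero : nuclearNorm (0 : X →L[ℝ] Y) = 0 :=
  le_antisymm (nuclearNorm_le_of_rep isNuclearRep_zero) (nuclearNorm_nonneg' 0)

lemma IsNuclearRep.norm_le {T : X →L[ℝ] Y} {r : ℝ} (h : IsNuclearRep T r) : ‖T‖ ≤ r := by
  obtain ⟨f, y, hs, hx, rfl⟩ := h
  refine T.opNorm_le_bound (tsum_nonneg fun n => mul_nonneg (norm_nonneg _) (norm_nonneg _))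
    fun x => ?_
  have h1 : ∀ n, ‖f n x • y n‖ ≤ ‖f n‖ * ‖y n‖ * ‖x‖ := by
    intro n
    rw [norm_smul]
    calc ‖f n x‖ * ‖y n‖ ≤ (‖f n‖ * ‖x‖) * ‖y n‖ := by
          gcongr
          exact (f n).le_opNorm x
      _ = ‖f n‖ * ‖y n‖ * ‖x‖ := by ring
  have hsx : Summable fun n => ‖f n x • y n‖ :=
    Summable.of_nonneg_of_le (fun n => norm_nonneg _) h1 (hs.mul_right ‖x‖)
  calc ‖T x‖ = ‖∑' n, f n x • y n‖ := by rw [(hx x).tsum_eq]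
    _ ≤ ∑' n, ‖f n x • y n‖ := norm_tsum_le_tsum_norm hsx
    _ ≤ ∑' n, ‖f n‖ * ‖y n‖ * ‖x‖ := Summable.tsum_le_tsum h1 hsx (hs.mul_right _)
    _ = (∑' n, ‖f n‖ * ‖y n‖) * ‖x‖ := tsum_mul_right

lemma isNuclearRep_single (f : X →L[ℝ] ℝ) (y : Y) :
    IsNuclearRep (f.smulRight y) (‖f‖ * ‖y‖) := by
  classical
  have hnorm : (fun n : ℕ =>
      ‖(if n = 0 then f else 0 : X →L[ℝ] ℝ)‖ * ‖(if n = 0 then y else 0 : Y)‖)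
      = fun n => if n = 0 then ‖f‖ * ‖y‖ else 0 := by
    funext n; by_cases h : n = 0 <;> simp [h]
  refine ⟨fun n => if n = 0 then f else 0, fun n => if n = 0 then y else 0, ?_, ?_, ?_⟩
  · rw [hnorm]; exact (hasSum_ite_eq 0 (‖f‖ * ‖y‖)).summable
  · intro x
    have h2 : (fun n : ℕ => (if n = 0 then f else 0 : X →L[ℝ] ℝ) x •
        (if n = 0 then y else 0 : Y)) = fun n => if n = 0 then f x • y else 0 := by
      funext n; by_cases h : n = 0 <;> simp [h]
    rw [h2]
    simpa using hasSum_ite_eq 0 (f x • y)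
  · rw [hnorm, (hasSum_ite_eq 0 (‖f‖ * ‖y‖)).tsum_eq]

lemma IsNuclearRep.const_smul {T : X →L[ℝ] Y} {r : ℝ} (h : IsNuclearRep T r) (c : ℝ) :
    IsNuclearRep (c • T) (|c| * r) := by
  obtain ⟨f, y, hs, hx, rfl⟩ := h
  have hnorm : (fun n => ‖c • f n‖ * ‖y n‖) = fun n => |c| * (‖f n‖ * ‖y n‖) := by
    funext n
    rw [show ‖c • f n‖ = |c| * ‖f n‖ by rw [norm_smul c (f n), Real.norm_eq_abs]]
    ring
  refine ⟨fun n => c • f n, y, ?_, ?_, ?_⟩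
  · rw [hnorm]; exact hs.mul_left _
  · intro x
    have h2 := (hx x).const_smul c
    simpa [smul_smul, ContinuousLinearMap.smul_apply] using h2
  · rw [hnorm, tsum_mul_left]

end Aux

section Aux2

variable {X Y : Type*} [NormedAddCommGroup X] [NormedSpace ℝ X]
  [NormedAddCommGroup Y] [NormedSpace ℝ Y] [CompleteSpace Y]

lemma summable_term (p : ℕ → X →L[ℝ] ℝ) (q : ℕ → Y)
    (hp : Summable fun n => ‖p n‖ * ‖q n‖) (x : X) :
    Summable fun n => p n x • q n := by
  refine Summable.of_norm (Summable.of_nonneg_of_le (fun n => norm_nonneg _)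
    (fun n => ?_) (hp.mul_right ‖x‖))
  rw [norm_smul]
  calc ‖p n x‖ * ‖q n‖ ≤ (‖p n‖ * ‖x‖) * ‖q n‖ := by
        gcongr; exact (p n).le_opNorm x
    _ = ‖p n‖ * ‖q n‖ * ‖x‖ := by ring

lemma isNuclearRep_interleave (S : X →L[ℝ] Y) (p P : ℕ → X →L[ℝ] ℝ) (q Q : ℕ → Y)
    (hp : Summable fun n => ‖p n‖ * ‖q n‖) (hP : Summable fun n => ‖P n‖ * ‖Q n‖)
    (hS : ∀ x, HasSum (fun n => p n x • q n + P n x • Q n) (S x)) :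
    IsNuclearRep S ((∑' n, ‖p n‖ * ‖q n‖) + ∑' n, ‖P n‖ * ‖Q n‖) := by
  classical
  set F : ℕ → X →L[ℝ] ℝ := fun k => if Even k then p (k / 2) else P (k / 2) with hF
  set Q' : ℕ → Y := fun k => if Even k then q (k / 2) else Q (k / 2) with hQ'
  have he : ∀ k : ℕ, Even (2 * k) := fun k => even_two_mul k
  have ho : ∀ k : ℕ, ¬ Even (2 * k + 1) := fun k => by rw [Nat.even_iff]; omega
  have hdiv1 : ∀ k : ℕ, 2 * k / 2 = k := fun k => by omega
  have hdiv2 : ∀ k : ℕ, (2 * k + 1) / 2 = k := fun k => by omega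
  have hFe : ∀ k, F (2 * k) = p k := fun k => by simp [hF, he k, hdiv1 k]
  have hFo : ∀ k, F (2 * k + 1) = P k := fun k => by simp [hF, ho k, hdiv2 k]
  have hQe : ∀ k, Q' (2 * k) = q k := fun k => by simp [hQ', he k, hdiv1 k]
  have hQo : ∀ k, Q' (2 * k + 1) = Q k := fun k => by simp [hQ', ho k, hdiv2 k]
  have hnormsum : HasSum (fun k => ‖F k‖ * ‖Q' k‖)
      ((∑' n, ‖p n‖ * ‖q n‖) + ∑' n, ‖P n‖ * ‖Q n‖) := by
    refine HasSum.even_add_odd ?_ ?_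
    · have h1 : (fun k => ‖F (2 * k)‖ * ‖Q' (2 * k)‖) = fun k => ‖p k‖ * ‖q k‖ :=
        funext fun k => by rw [hFe, hQe]
      rw [h1]; exact hp.hasSum
    · have h1 : (fun k => ‖F (2 * k + 1)‖ * ‖Q' (2 * k + 1)‖) = fun k => ‖P k‖ * ‖Q k‖ :=
        funext fun k => by rw [hFo, hQo]
      rw [h1]; exact hP.hasSum
  refine ⟨F, Q', hnormsum.summable, ?_, hnormsum.tsum_eq.symm⟩
  intro x
  have ha := (summable_term p q hp x).hasSum
  have hb := (summable_term P Q hP x).hasSum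
  have hab : (∑' n, p n x • q n) + (∑' n, P n x • Q n) = S x := (ha.add hb).unique (hS x)
  rw [← hab]
  refine HasSum.even_add_odd ?_ ?_
  · have h1 : (fun k => F (2 * k) x • Q' (2 * k)) = fun k => p k x • q k :=
      funext fun k => by rw [hFe, hQe]
    rw [h1]; exact ha
  · have h1 : (fun k => F (2 * k + 1) x • Q' (2 * k + 1)) = fun k => P k x • Q k :=
      funext fun k => by rw [hFo, hQo]
    rw [h1]; exact hb

lemma IsNuclearRep.add {S T : X →L[ℝ] Y} {r s : ℝ} (hS : IsNuclearRep S r)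
    (hT : IsNuclearRep T s) : IsNuclearRep (S + T) (r + s) := by
  obtain ⟨f, y, h1, h2, rfl⟩ := hS
  obtain ⟨f', y', h1', h2', rfl⟩ := hT
  exact isNuclearRep_interleave _ f f' y y' h1 h1' fun x => by
    simpa using (h2 x).add (h2' x)

def nucSub (X Y : Type*) [NormedAddCommGroup X] [NormedSpace ℝ X] [NormedAddCommGroup Y]
    [NormedSpace ℝ Y] [CompleteSpace Y] : Submodule ℝ (X →L[ℝ] Y) where
  carrier := {T | IsNuclearOp T}
  zero_mem' := ⟨0, isNuclearRep_zero⟩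
  add_mem' := fun hA hB => by
    obtain ⟨r, hr⟩ := hA; obtain ⟨s, hs⟩ := hB; exact ⟨r + s, hr.add hs⟩
  smul_mem' := fun c T hT => by
    obtain ⟨r, hr⟩ := hT; exact ⟨|c| * r, hr.const_smul c⟩

lemma mem_nucSub {T : X →L[ℝ] Y} : T ∈ nucSub X Y ↔ IsNuclearOp T := Iff.rfl

lemma smulRight_mem_nucSub (f : X →L[ℝ] ℝ) (y : Y) : f.smulRight y ∈ nucSub X Y :=
  ⟨_, isNuclearRep_single f y⟩

lemma nuclearNorm_add_le {S T : X →L[ℝ] Y} (hS : IsNuclearOp S) (hT : IsNuclearOp T) :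
    nuclearNorm (S + T) ≤ nuclearNorm S + nuclearNorm T := by
  refine le_of_forall_pos_le_add' fun ε hε => ?_
  obtain ⟨r, hr, hrlt⟩ := Real.lt_sInf_add_pos hS (half_pos hε)
  obtain ⟨s, hs, hslt⟩ := Real.lt_sInf_add_pos hT (half_pos hε)
  have hr' : IsNuclearRep S r := hr
  have hs' : IsNuclearRep T s := hs
  have h1 : nuclearNorm (S + T) ≤ r + s := nuclearNorm_le_of_rep (hr'.add hs')
  have h2 : r < nuclearNorm S + ε / 2 := hrlt
  have h3 : s < nuclearNorm T + ε / 2 := hslt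
  linarith

lemma nuclearNorm_smul_le (c : ℝ) {T : X →L[ℝ] Y} (hT : IsNuclearOp T) :
    nuclearNorm (c • T) ≤ |c| * nuclearNorm T := by
  rcases eq_or_ne c 0 with rfl | hc
  · simp [zero_smul, nuclearNorm_zero]
  refine le_of_forall_pos_le_add' fun ε hε => ?_
  obtain ⟨r, hr, hrlt⟩ := Real.lt_sInf_add_pos hT (div_pos hε (abs_pos.2 hc))
  have hr' : IsNuclearRep T r := hr
  have h2 : r < nuclearNorm T + ε / |c| := hrlt
  calc nuclearNorm (c • T) ≤ |c| * r := nuclearNorm_le_of_rep (hr'.const_smul c)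
    _ ≤ |c| * (nuclearNorm T + ε / |c|) := by
        exact mul_le_mul_of_nonneg_left h2.le (abs_nonneg c)
    _ = |c| * nuclearNorm T + ε := by
        rw [mul_add, mul_div_cancel₀ _ (abs_ne_zero.mpr hc)]

lemma nuclearNorm_smul (c : ℝ) {T : X →L[ℝ] Y} (hT : IsNuclearOp T) :
    nuclearNorm (c • T) = |c| * nuclearNorm T := by
  rcases eq_or_ne c 0 with rfl | hc
  · simp [zero_smul, nuclearNorm_zero]
  refine le_antisymm (nuclearNorm_smul_le c hT) ?_
  have hcs : IsNuclearOp (c • T) := by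
    obtain ⟨r, hr⟩ := hT; exact ⟨|c| * r, hr.const_smul c⟩
  have h2 := nuclearNorm_smul_le c⁻¹ hcs
  rw [inv_smul_smul₀ hc, abs_inv] at h2
  have h3 : |c| * nuclearNorm T ≤ |c| * (|c|⁻¹ * nuclearNorm (c • T)) :=
    mul_le_mul_of_nonneg_left h2 (abs_nonneg c)
  have hcabs : (|c| : ℝ) ≠ 0 := fun h => hc (abs_eq_zero.1 h)
  calc |c| * nuclearNorm T ≤ |c| * (|c|⁻¹ * nuclearNorm (c • T)) := h3
    _ = nuclearNorm (c • T) := by field_simp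

lemma nuclearNorm_neg {T : X →L[ℝ] Y} (hT : IsNuclearOp T) :
    nuclearNorm (-T) = nuclearNorm T := by
  have := nuclearNorm_smul (-1) hT
  simpa using this

lemma isNuclearRep_sub_finset {T : X →L[ℝ] Y} (f : ℕ → X →L[ℝ] ℝ) (y : ℕ → Y)
    (hsum : Summable fun n => ‖f n‖ * ‖y n‖)
    (hTx : ∀ x, HasSum (fun n => f n x • y n) (T x)) (s : Finset ℕ) :
    IsNuclearRep (T - ∑ n ∈ s, (f n).smulRight (y n))
      (∑' n, if n ∈ s then 0 else ‖f n‖ * ‖y n‖) := by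
  classical
  have hnorm : (fun n => ‖(if n ∈ s then 0 else f n : X →L[ℝ] ℝ)‖ * ‖y n‖) =
      fun n => if n ∈ s then 0 else ‖f n‖ * ‖y n‖ := by
    funext n; by_cases h : n ∈ s <;> simp [h]
  refine ⟨fun n => if n ∈ s then 0 else f n, y, ?_, ?_, ?_⟩
  · rw [hnorm]
    refine Summable.of_nonneg_of_le (fun n => ?_) (fun n => ?_) hsum
    · by_cases h : n ∈ s <;>
        simp [h, mul_nonneg, norm_nonneg]
    · by_cases h : n ∈ s <;>
        simp [h, mul_nonneg, norm_nonneg]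
  · intro x
    have h1 : HasSum (fun n => if n ∈ s then f n x • y n else 0)
        (∑ n ∈ s, f n x • y n) := by
      have h0 := hasSum_sum_of_ne_finset_zero (L := SummationFilter.unconditional ℕ) (s := s)
        (f := fun n => if n ∈ s then f n x • y n else 0) (fun n hn => if_neg hn)
      convert h0 using 1
      exact (Finset.sum_congr rfl fun n hn => (if_pos hn).symm)
    have h2 := (hTx x).sub h1
    have h3 : (fun n => (if n ∈ s then 0 else f n : X →L[ℝ] ℝ) x • y n) =
        fun n => f n x • y n - (if n ∈ s then f n x • y n else 0) := by
      funext n; by_cases h : n ∈ s <;> simp [h]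
    rw [h3]
    convert h2 using 1
    simp [ContinuousLinearMap.sub_apply]
  · rw [hnorm]

lemma g_hasSum (g : ↥(nucSub X Y) →ₗ[ℝ] ℝ)
    (hg : ∀ z : ↥(nucSub X Y), |g z| ≤ nuclearNorm (z : X →L[ℝ] Y))
    {T : X →L[ℝ] Y} (f : ℕ → X →L[ℝ] ℝ) (y : ℕ → Y)
    (hsum : Summable fun n => ‖f n‖ * ‖y n‖)
    (hTx : ∀ x, HasSum (fun n => f n x • y n) (T x)) (hTmem : T ∈ nucSub X Y) :
    HasSum (fun n => g ⟨(f n).smulRight (y n), smulRight_mem_nucSub (f n) (y n)⟩)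
      (g ⟨T, hTmem⟩) := by
  classical
  set elt : ℕ → ↥(nucSub X Y) :=
    fun n => ⟨(f n).smulRight (y n), smulRight_mem_nucSub _ _⟩ with helt
  have key : ∀ s : Finset ℕ, |(∑ n ∈ s, g (elt n)) - g ⟨T, hTmem⟩| ≤
      ∑' n, if n ∈ s then 0 else ‖f n‖ * ‖y n‖ := by
    intro s
    have hmemsum : (∑ n ∈ s, (f n).smulRight (y n)) ∈ nucSub X Y :=
      Submodule.sum_mem _ fun n _ => smulRight_mem_nucSub _ _
    have hcoe : (∑ n ∈ s, elt n : ↥(nucSub X Y)) =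
        ⟨∑ n ∈ s, (f n).smulRight (y n), hmemsum⟩ := by
      ext
      simp [helt]
    have h1 : (∑ n ∈ s, g (elt n)) - g ⟨T, hTmem⟩ =
        g (⟨∑ n ∈ s, (f n).smulRight (y n), hmemsum⟩ - ⟨T, hTmem⟩) := by
      rw [map_sub, ← hcoe, map_sum]
    rw [h1]
    refine (hg _).trans ?_
    have hval : ((⟨∑ n ∈ s, (f n).smulRight (y n), hmemsum⟩ - ⟨T, hTmem⟩ :
        ↥(nucSub X Y)) : X →L[ℝ] Y) = -(T - ∑ n ∈ s, (f n).smulRight (y n)) := by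
      simp [neg_sub]
    rw [hval, nuclearNorm_neg ⟨_, isNuclearRep_sub_finset f y hsum hTx s⟩]
    exact nuclearNorm_le_of_rep (isNuclearRep_sub_finset f y hsum hTx s)
  have htail : Filter.Tendsto (fun s : Finset ℕ => ∑' n, if n ∈ s then 0 else ‖f n‖ * ‖y n‖)
      Filter.atTop (nhds 0) := by
    have heq : ∀ s : Finset ℕ, (∑' n, if n ∈ s then 0 else ‖f n‖ * ‖y n‖) =
        (∑' n, ‖f n‖ * ‖y n‖) - ∑ n ∈ s, ‖f n‖ * ‖y n‖ := by
      intro s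
      have hfin : HasSum (fun n => if n ∈ s then ‖f n‖ * ‖y n‖ else 0)
          (∑ n ∈ s, ‖f n‖ * ‖y n‖) := by
        have h0 := hasSum_sum_of_ne_finset_zero (L := SummationFilter.unconditional ℕ) (s := s)
          (f := fun n => if n ∈ s then ‖f n‖ * ‖y n‖ else 0) (fun n hn => if_neg hn)
        convert h0 using 1
        exact (Finset.sum_congr rfl fun n hn => (if_pos hn).symm)
      have hsub := hsum.hasSum.sub hfin
      have heq2 : (fun n => ‖f n‖ * ‖y n‖ - if n ∈ s then ‖f n‖ * ‖y n‖ else 0) =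
          fun n => if n ∈ s then 0 else ‖f n‖ * ‖y n‖ := by
        funext n; by_cases h : n ∈ s <;> simp [h]
      rw [heq2] at hsub
      exact hsub.tsum_eq
    simp only [heq]
    have h0 : Filter.Tendsto
        (fun s : Finset ℕ => (∑' n, ‖f n‖ * ‖y n‖) - ∑ n ∈ s, ‖f n‖ * ‖y n‖)
        Filter.atTop (nhds ((∑' n, ‖f n‖ * ‖y n‖) - ∑' n, ‖f n‖ * ‖y n‖)) :=
      tendsto_const_nhds.sub hsum.hasSum
    simpa using h0
  have : Filter.Tendsto (fun s : Finset ℕ => ∑ n ∈ s, g (elt n)) Filter.atTop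
      (nhds (g ⟨T, hTmem⟩)) := by
    refine tendsto_iff_dist_tendsto_zero.2 ?_
    exact squeeze_zero (fun s => dist_nonneg)
      (fun s => by rw [Real.dist_eq]; exact key s) htail
  exact this

def Bform (g : ↥(nucSub X Y) →ₗ[ℝ] ℝ)
    (hg : ∀ z : ↥(nucSub X Y), |g z| ≤ nuclearNorm (z : X →L[ℝ] Y)) :
    (X →L[ℝ] ℝ) →L[ℝ] Y →L[ℝ] ℝ :=
  LinearMap.mkContinuous₂
    (LinearMap.mk₂ ℝ (fun f y => g ⟨f.smulRight y, smulRight_mem_nucSub f y⟩)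
      (fun f₁ f₂ y => by
        rw [← map_add]
        refine congrArg g (Subtype.ext ?_)
        simp only [Submodule.coe_add]
        ext x
        simp [add_smul])
      (fun c f y => by
        rw [← map_smul]
        refine congrArg g (Subtype.ext ?_)
        simp only [SetLike.val_smul]
        ext x
        simp [smul_smul])
      (fun f y₁ y₂ => by
        rw [← map_add]
        refine congrArg g (Subtype.ext ?_)
        simp only [Submodule.coe_add]
        ext x
        simp [smul_add])
      (fun c f y => by
        rw [← map_smul]
        refine congrArg g (Subtype.ext ?_)
        simp only [SetLike.val_smul]
        ext x
        simp only [ContinuousLinearMap.smulRight_apply, ContinuousLinearMap.smul_apply]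
        rw [smul_comm]))
    1 (fun f y => by
      have h1 := hg ⟨f.smulRight y, smulRight_mem_nucSub f y⟩
      have h2 := nuclearNorm_le_of_rep (isNuclearRep_single f y)
      simp only [Real.norm_eq_abs, one_mul, LinearMap.mk₂_apply]
      calc |g ⟨f.smulRight y, smulRight_mem_nucSub f y⟩| ≤
          nuclearNorm (f.smulRight y) := h1
        _ ≤ ‖f‖ * ‖y‖ := h2)

lemma Bform_apply (g : ↥(nucSub X Y) →ₗ[ℝ] ℝ)
    (hg : ∀ z : ↥(nucSub X Y), |g z| ≤ nuclearNorm (z : X →L[ℝ] Y))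
    (f : X →L[ℝ] ℝ) (y : Y) :
    Bform g hg f y = g ⟨f.smulRight y, smulRight_mem_nucSub f y⟩ := rfl

lemma Bform_norm_le (g : ↥(nucSub X Y) →ₗ[ℝ] ℝ)
    (hg : ∀ z : ↥(nucSub X Y), |g z| ≤ nuclearNorm (z : X →L[ℝ] Y)) :
    ‖Bform g hg‖ ≤ 1 :=
  LinearMap.mkContinuous₂_norm_le _ zero_le_one _

end Aux2

set_option maxHeartbeats 1000000 in
/-- If `(X* × Y, ℝ)` has property L_{o,o} for bilinear forms then every
nuclear operator from `X` to `Y` can be approximated in the nuclear norm by nuclear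
operators which attain their nuclear norm. -/
theorem nuclear_normAttaining_dense_of_bilinLoo
    {X Y : Type*} [NormedAddCommGroup X] [NormedSpace ℝ X] [CompleteSpace X]
    [NormedAddCommGroup Y] [NormedSpace ℝ Y] [CompleteSpace Y]
    (hL : BilinLoo (X →L[ℝ] ℝ) Y) :
    ∀ T : X →L[ℝ] Y, IsNuclearOp T → ∀ ε : ℝ, 0 < ε →
      ∃ T' : X →L[ℝ] Y, AttainsNuclearNorm T' ∧
        ∃ r : ℝ, IsNuclearRep (T - T') r ∧ r < ε := by
  classical
  intro T hT ε hε
  by_cases hT0 : nuclearNorm T = 0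
  · -- then T = 0 and T' = 0 works
    have h1 : ‖T‖ ≤ nuclearNorm T := le_csInf hT fun r hr => IsNuclearRep.norm_le hr
    have hTzero : T = 0 := by
      rw [hT0] at h1
      exact norm_le_zero_iff.1 h1
    refine ⟨0, ?_, 0, ?_, hε⟩
    · show IsNuclearRep (0 : X →L[ℝ] Y) (nuclearNorm (0 : X →L[ℝ] Y))
      rw [nuclearNorm_zero]
      exact isNuclearRep_zero
    · simpa [hTzero] using isNuclearRep_zero
  have hN0 : 0 < nuclearNorm T := (nuclearNorm_nonneg' T).lt_of_ne (Ne.symm hT0)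
  set N₀ := nuclearNorm T with hN₀def
  have hTne : T ≠ 0 := by
    rintro rfl
    exact hT0 nuclearNorm_zero
  set Tsub : ↥(nucSub X Y) := ⟨T, hT⟩ with hTsubdef
  have hTsubne : Tsub ≠ 0 := by
    intro h
    exact hTne (congrArg Subtype.val h)
  -- Hahn–Banach
  obtain ⟨g, hgf, hgle⟩ := exists_extension_of_le_sublinear
    (LinearPMap.mkSpanSingleton Tsub N₀ hTsubne)
    (fun z => nuclearNorm (z : X →L[ℝ] Y))
    (fun c hc z => by
      show nuclearNorm ((c • z : ↥(nucSub X Y)) : X →L[ℝ] Y) = c * nuclearNorm (z : X →L[ℝ] Y)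
      have hz : ((c • z : ↥(nucSub X Y)) : X →L[ℝ] Y) = c • (z : X →L[ℝ] Y) := rfl
      rw [hz, nuclearNorm_smul c z.2, abs_of_pos hc])
    (fun z w => by
      show nuclearNorm ((z + w : ↥(nucSub X Y)) : X →L[ℝ] Y) ≤
        nuclearNorm (z : X →L[ℝ] Y) + nuclearNorm (w : X →L[ℝ] Y)
      have hz : ((z + w : ↥(nucSub X Y)) : X →L[ℝ] Y) =
          (z : X →L[ℝ] Y) + (w : X →L[ℝ] Y) := rfl
      rw [hz]
      exact nuclearNorm_add_le z.2 w.2)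
    (fun x => by
      obtain ⟨c, hc⟩ := Submodule.mem_span_singleton.1 x.2
      have hxeq : x = ⟨c • Tsub, hc ▸ x.2⟩ := Subtype.ext hc.symm
      rw [hxeq, LinearPMap.mkSpanSingleton'_apply]
      have hval : (((c • Tsub : ↥(nucSub X Y))) : X →L[ℝ] Y) = c • T := rfl
      show c • N₀ ≤ nuclearNorm ((c • Tsub : ↥(nucSub X Y)) : X →L[ℝ] Y)
      rw [hval, nuclearNorm_smul c hT]
      have : c ≤ |c| := le_abs_self c
      have := hN0.le
      rw [smul_eq_mul, ← hN₀def]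
      nlinarith only [le_abs_self c, hN0.le])
  have hgT : g Tsub = N₀ := by
    have h1 := hgf ⟨Tsub, Submodule.mem_span_singleton_self Tsub⟩
    rw [LinearPMap.mkSpanSingleton_apply] at h1
    exact h1
  have habs : ∀ z : ↥(nucSub X Y), |g z| ≤ nuclearNorm (z : X →L[ℝ] Y) := by
    intro z
    refine abs_le.2 ⟨?_, hgle z⟩
    have h2 := hgle (-z)
    rw [map_neg] at h2
    have hz : ((-z : ↥(nucSub X Y)) : X →L[ℝ] Y) = -(z : X →L[ℝ] Y) := rfl
    rw [hz, nuclearNorm_neg z.2] at h2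
    linarith only [h2]
  set B := Bform g habs with hBdef
  clear_value B
  have hB1 : ‖B‖ ≤ 1 := by rw [hBdef]; exact Bform_norm_le g habs
  have hBbound : ∀ (f : X →L[ℝ] ℝ) (yy : Y), |B f yy| ≤ ‖f‖ * ‖yy‖ := by
    intro f yy
    rw [hBdef, Bform_apply]
    exact (habs _).trans (nuclearNorm_le_of_rep (isNuclearRep_single f yy))
  have hgBsum : ∀ (f : ℕ → X →L[ℝ] ℝ) (y : ℕ → Y),
      (Summable fun n => ‖f n‖ * ‖y n‖) →
      (∀ x, HasSum (fun n => f n x • y n) (T x)) →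
      HasSum (fun n => B (f n) (y n)) N₀ := by
    intro f y hsum hTx
    have h := g_hasSum g habs f y hsum hTx hT
    have hfun : (fun n => B (f n) (y n)) =
        fun n => g ⟨(f n).smulRight (y n), smulRight_mem_nucSub (f n) (y n)⟩ := by
      funext n; rw [hBdef, Bform_apply]
    rw [hfun]
    rwa [← hTsubdef, hgT] at h
  -- ‖B‖ = 1
  have hBge : N₀ ≤ ‖B‖ * N₀ := by
    refine le_of_forall_pos_le_add' fun δ hδ => ?_
    obtain ⟨Λ, hΛ, hΛlt⟩ := Real.lt_sInf_add_pos hT hδ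
    obtain ⟨f, y, hsum, hTx, hΛeq⟩ := (hΛ : IsNuclearRep T Λ)
    have hΛlt' : Λ < N₀ + δ := hΛlt
    have hBsum := hgBsum f y hsum hTx
    have h1 : N₀ ≤ ∑' n, ‖B‖ * (‖f n‖ * ‖y n‖) := by
      rw [← hBsum.tsum_eq]
      refine Summable.tsum_le_tsum (fun n => ?_) hBsum.summable (hsum.mul_left _)
      calc B (f n) (y n) ≤ |B (f n) (y n)| := le_abs_self _
        _ = ‖B (f n) (y n)‖ := (Real.norm_eq_abs _).symm
        _ ≤ ‖B‖ * ‖f n‖ * ‖y n‖ := B.le_opNorm₂ (f n) (y n)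
        _ = ‖B‖ * (‖f n‖ * ‖y n‖) := by ring
    rw [tsum_mul_left, ← hΛeq] at h1
    nlinarith only [norm_nonneg B, mul_le_mul_of_nonneg_left hΛlt'.le (norm_nonneg B), h1, hB1, hδ]
  have hBnorm : ‖B‖ = 1 := by
    refine le_antisymm hB1 ?_
    nlinarith only [hBge, hN0]
  -- parameters
  set ε' : ℝ := min (1 / 4) (ε / (4 * (N₀ + 1))) with hε'def
  have hε'pos : 0 < ε' := lt_min (by norm_num) (div_pos hε (by positivity))
  have hε'le14 : ε' ≤ 1 / 4 := min_le_left _ _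
  obtain ⟨η₀, hη₀pos, hη₀⟩ := hL B hBnorm ε' hε'pos
  set η : ℝ := min η₀ (1 / 2) with hηdef
  have hηpos : 0 < η := lt_min hη₀pos (by norm_num)
  have hη12 : η ≤ 1 / 2 := min_le_right _ _
  set δ : ℝ := min 1 (η * ε / 4) with hδdef
  have hδpos : 0 < δ := lt_min one_pos (by positivity)
  obtain ⟨Λ, hΛ, hΛlt⟩ := Real.lt_sInf_add_pos hT hδpos
  obtain ⟨f, y, hsum, hTx, hΛeq⟩ := (hΛ : IsNuclearRep T Λ)
  have hΛlt' : Λ < N₀ + δ := hΛlt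
  set lam : ℕ → ℝ := fun n => ‖f n‖ * ‖y n‖ with hlamdef
  have hlamnn : ∀ n, 0 ≤ lam n := fun n => mul_nonneg (norm_nonneg _) (norm_nonneg _)
  have hsumlam : Summable lam := hsum
  set u : ℕ → X →L[ℝ] ℝ := fun n => ‖f n‖⁻¹ • f n with hudef
  set v : ℕ → Y := fun n => ‖y n‖⁻¹ • y n with hvdef
  have hfnorm : ∀ n, 0 < lam n →
      ‖u n‖ = 1 ∧ ‖v n‖ = 1 ∧ f n = ‖f n‖ • u n ∧ y n = ‖y n‖ • v n := by
    intro n hn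
    have hl : lam n = ‖f n‖ * ‖y n‖ := rfl
    have hf0 : ‖f n‖ ≠ 0 := by
      intro h
      rw [hl, h, zero_mul] at hn
      exact lt_irrefl 0 hn
    have hy0 : ‖y n‖ ≠ 0 := by
      intro h
      rw [hl, h, mul_zero] at hn
      exact lt_irrefl 0 hn
    refine ⟨?_, ?_, ?_, ?_⟩
    · rw [hudef]
      rw [show ‖(‖f n‖⁻¹ : ℝ) • f n‖ = |(‖f n‖)⁻¹| * ‖f n‖ by
        rw [norm_smul (‖f n‖⁻¹) (f n), Real.norm_eq_abs]]
      rw [abs_inv, abs_norm, inv_mul_cancel₀ hf0]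
    · rw [hvdef]
      rw [norm_smul, Real.norm_eq_abs, abs_inv, abs_norm, inv_mul_cancel₀ hy0]
    · exact (smul_inv_smul₀ hf0 (f n)).symm
    · exact (smul_inv_smul₀ hy0 (y n)).symm
  set G : Set ℕ := {n | 0 < lam n ∧ 1 - η < B (u n) (v n)} with hGdef
  have hGmem : ∀ n, n ∈ G ↔ (0 < lam n ∧ 1 - η < B (u n) (v n)) := fun n => Iff.rfl
  clear_value G
  have hBzero : ∀ n, lam n = 0 → B (f n) (y n) = 0 := by
    intro n hn
    rcases mul_eq_zero.1 hn with h | h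
    · rw [norm_eq_zero.1 h]
      simp
    · rw [norm_eq_zero.1 h]
      simp
  have hBval : ∀ n, 0 < lam n → B (f n) (y n) = lam n * B (u n) (v n) := by
    intro n hn
    obtain ⟨hu1, hv1, hfu, hyv⟩ := hfnorm n hn
    have hl : lam n = ‖f n‖ * ‖y n‖ := rfl
    conv_lhs => rw [hfu, hyv]
    rw [hl]
    simp only [map_smul, ContinuousLinearMap.smul_apply, smul_eq_mul]
    ring
  have hBsumT := hgBsum f y hsum hTx
  have hslacknn : ∀ n, 0 ≤ lam n - B (f n) (y n) := by
    intro n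
    have h := hBbound (f n) (y n)
    have h2 := le_abs_self (B (f n) (y n))
    have hl : lam n = ‖f n‖ * ‖y n‖ := rfl
    linarith only [hl.ge, hl.le, h, h2, abs_nonneg (B (f n) (y n))]
  have hslack_sum : HasSum (fun n => lam n - B (f n) (y n)) (Λ - N₀) := by
    have h1 : HasSum lam Λ := by rw [hΛeq]; exact hsum.hasSum
    exact h1.sub hBsumT
  set badlam : ℕ → ℝ := fun n => if n ∈ G then 0 else lam n with hbaddef
  clear_value badlam
  have hbadnn : ∀ n, 0 ≤ badlam n := by
    intro n
    rw [hbaddef]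
    by_cases h : n ∈ G <;> simp [h, hlamnn n]
  have hbadsummable : Summable badlam := by
    refine Summable.of_nonneg_of_le hbadnn (fun n => ?_) hsumlam
    rw [hbaddef]
    by_cases h : n ∈ G <;> simp [h, hlamnn n]
  have hbadbound : η * ∑' n, badlam n ≤ Λ - N₀ := by
    rw [← tsum_mul_left]
    rw [← hslack_sum.tsum_eq]
    refine Summable.tsum_le_tsum (fun n => ?_) (hbadsummable.mul_left η) hslack_sum.summable
    by_cases hn : n ∈ G
    · simp only [hbaddef, if_pos hn, mul_zero]
      exact hslacknn n
    · simp only [hbaddef, if_neg hn]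
      rcases eq_or_lt_of_le (hlamnn n) with h0 | h0
      · rw [← h0, hBzero n h0.symm]
        simp
      · have hBle : B (u n) (v n) ≤ 1 - η := by
          by_contra hcon
          push_neg at hcon
          exact hn ((hGmem n).2 ⟨h0, hcon⟩)
        rw [hBval n h0]
        have h9 : η ≤ 1 - B (u n) (v n) := by linarith only [hBle]
        calc η * lam n = lam n * η := mul_comm _ _
          _ ≤ lam n * (1 - B (u n) (v n)) := mul_le_mul_of_nonneg_left h9 (hlamnn n)
          _ = lam n - lam n * B (u n) (v n) := by ring
  have hbadlt : ∑' n, badlam n ≤ δ / η := by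
    rw [le_div_iff₀ hηpos]
    have hcomm : (∑' n, badlam n) * η = η * ∑' n, badlam n := mul_comm _ _
    linarith only [hbadbound, hΛlt', hcomm]
  -- selection via property L_{o,o}
  have hsel : ∀ n : ℕ, ∃ (u₀ : X →L[ℝ] ℝ) (v₀ : Y), n ∈ G →
      ‖u₀‖ = 1 ∧ ‖v₀‖ = 1 ∧ B u₀ v₀ = 1 ∧ ‖u n - u₀‖ < ε' ∧ ‖v n - v₀‖ < ε' := by
    intro n
    by_cases hn : n ∈ G
    · obtain ⟨hlampos, hBuv⟩ := (hGmem n).1 hn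
      obtain ⟨hu1, hv1, -, -⟩ := hfnorm n hlampos
      have h1 : 1 - η₀ < |B (u n) (v n)| := by
        have h2 := le_abs_self (B (u n) (v n))
        have h3 : η ≤ η₀ := min_le_left _ _
        linarith only [h2, h3, hBuv]
      obtain ⟨x₀, y₀, hx₀, hy₀, hBx₀, hdx, hdy⟩ := hη₀ (u n) (v n) hu1 hv1 h1
      refine ⟨x₀, y₀, fun _ => ⟨hx₀, hy₀, ?_, hdx, hdy⟩⟩
      have hclose : |B x₀ y₀ - B (u n) (v n)| ≤ ε' + ε' := by
        have e1 : B x₀ y₀ - B (u n) (v n) = B x₀ (y₀ - v n) + (B x₀ (v n) - B (u n) (v n)) := by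
          rw [map_sub]
          ring
        have e2 : B x₀ (v n) - B (u n) (v n) = B (x₀ - u n) (v n) := by
          rw [map_sub]
          simp [ContinuousLinearMap.sub_apply]
        rw [e1, e2]
        refine (abs_add_le _ _).trans (add_le_add ?_ ?_)
        · refine (hBbound _ _).trans ?_
          rw [hx₀, one_mul]
          rw [norm_sub_rev]
          exact hdy.le
        · refine (hBbound _ _).trans ?_
          rw [hv1, mul_one, norm_sub_rev]
          exact hdx.le
      have hpos : 0 < B x₀ y₀ := by
        have h4 := abs_le.1 hclose
        linarith only [hε'le14, hη12, h4.1, hBuv]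
      rcases abs_cases (B x₀ y₀) with ⟨h5, -⟩ | ⟨-, h6⟩
      · rw [← h5, hBx₀]
      · linarith only [hpos, h6]
    · exact ⟨0, 0, fun h => absurd h hn⟩
  choose u₀ v₀ hu₀v₀ using hsel
  -- the approximating operator
  set F' : ℕ → X →L[ℝ] ℝ := fun n => if n ∈ G then lam n • u₀ n else 0 with hF'def
  set Y' : ℕ → Y := fun n => if n ∈ G then v₀ n else 0 with hY'def
  clear_value F' Y'
  set glam : ℕ → ℝ := fun n => if n ∈ G then lam n else 0 with hglamdef
  clear_value glam
  have hF'norm : ∀ n, ‖F' n‖ * ‖Y' n‖ = glam n := by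
    intro n
    by_cases hn : n ∈ G
    · obtain ⟨hu1, hv1, -, -, -⟩ := hu₀v₀ n hn
      simp only [hF'def, hY'def, hglamdef, if_pos hn]
      rw [show ‖lam n • u₀ n‖ = |lam n| * ‖u₀ n‖ by
        rw [norm_smul (lam n) (u₀ n), Real.norm_eq_abs], hu1, hv1,
        abs_of_nonneg (hlamnn n)]
      ring
    · simp [hF'def, hY'def, hglamdef, hn]
  have hglam_sum : Summable glam := by
    refine Summable.of_nonneg_of_le (fun n => ?_) (fun n => ?_) hsumlam
    · rw [hglamdef]; by_cases h : n ∈ G <;> simp [h, hlamnn n]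
    · rw [hglamdef]; by_cases h : n ∈ G <;> simp [h, hlamnn n]
  have hF'sum : Summable (fun n => ‖F' n‖ * ‖Y' n‖) := by
    rw [show (fun n => ‖F' n‖ * ‖Y' n‖) = glam from funext hF'norm]
    exact hglam_sum
  have hhsummable : Summable (fun n => (F' n).smulRight (Y' n)) := by
    refine Summable.of_norm ?_
    have h1 : (fun n => ‖(F' n).smulRight (Y' n)‖) = fun n => ‖F' n‖ * ‖Y' n‖ := by
      funext n
      rw [ContinuousLinearMap.norm_smulRight_apply]
    rw [h1]
    exact hF'sum
  set T' : X →L[ℝ] Y := ∑' n, (F' n).smulRight (Y' n) with hT'def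
  have hT'x : ∀ x, HasSum (fun n => F' n x • Y' n) (T' x) := by
    intro x
    have h1 := hhsummable.hasSum.mapL (ContinuousLinearMap.apply ℝ Y x)
    rw [hT'def]
    simpa using h1
  clear_value T'
  have hrepT' : IsNuclearRep T' (∑' n, glam n) := by
    refine ⟨F', Y', hF'sum, hT'x, ?_⟩
    rw [show (fun n => ‖F' n‖ * ‖Y' n‖) = glam from funext hF'norm]
  have hT'mem : IsNuclearOp T' := ⟨_, hrepT'⟩
  have hBF' : ∀ n, B (F' n) (Y' n) = glam n := by
    intro n
    by_cases hn : n ∈ G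
    · obtain ⟨-, -, hBone, -, -⟩ := hu₀v₀ n hn
      simp only [hF'def, hY'def, hglamdef, if_pos hn]
      rw [map_smul, ContinuousLinearMap.smul_apply, hBone, smul_eq_mul, mul_one]
    · simp [hF'def, hY'def, hglamdef, hn]
  have hgT'val : g ⟨T', hT'mem⟩ = ∑' n, glam n := by
    have h := g_hasSum g habs F' Y' hF'sum hT'x hT'mem
    have hfun : (fun n => g ⟨(F' n).smulRight (Y' n), smulRight_mem_nucSub (F' n) (Y' n)⟩) =
        glam := by
      funext n
      rw [← hBF' n, hBdef, Bform_apply]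
    rw [hfun] at h
    exact (h.tsum_eq).symm
  have hattains : AttainsNuclearNorm T' := by
    have hle : nuclearNorm T' ≤ ∑' n, glam n := nuclearNorm_le_of_rep hrepT'
    have hge : (∑' n, glam n) ≤ nuclearNorm T' := by
      rw [← hgT'val]
      exact hgle ⟨T', hT'mem⟩
    show IsNuclearRep T' (nuclearNorm T')
    rw [le_antisymm hle hge]
    exact hrepT'
  -- representation of T - T'
  set p : ℕ → X →L[ℝ] ℝ := fun n => if n ∈ G then lam n • (u n - u₀ n) else f n with hpdef
  set q : ℕ → Y := fun n => if n ∈ G then v n else y n with hqdef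
  set Q2 : ℕ → Y := fun n => if n ∈ G then v n - v₀ n else 0 with hQ2def
  clear_value p q Q2
  have hpq : ∀ n, ‖p n‖ * ‖q n‖ ≤ ε' * lam n + badlam n := by
    intro n
    by_cases hn : n ∈ G
    · obtain ⟨hu1, hv1, -, -⟩ := hfnorm n ((hGmem n).1 hn).1
      obtain ⟨-, -, -, hdu, -⟩ := hu₀v₀ n hn
      simp only [hpdef, hqdef, hbaddef, if_pos hn]
      rw [show ‖lam n • (u n - u₀ n)‖ = |lam n| * ‖u n - u₀ n‖ by
        rw [norm_smul (lam n) (u n - u₀ n), Real.norm_eq_abs], hv1,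
        abs_of_nonneg (hlamnn n), mul_one, add_zero]
      rw [mul_comm (ε' : ℝ) (lam n)]
      exact mul_le_mul_of_nonneg_left hdu.le (hlamnn n)
    · simp only [hpdef, hqdef, hbaddef, if_neg hn]
      have hl : lam n = ‖f n‖ * ‖y n‖ := rfl
      rw [← hl]
      have h8 := mul_nonneg hε'pos.le (hlamnn n)
      linarith only [h8]
  have hPQ : ∀ n, ‖F' n‖ * ‖Q2 n‖ ≤ ε' * lam n := by
    intro n
    by_cases hn : n ∈ G
    · obtain ⟨hu1, -, -, -, hdv⟩ := hu₀v₀ n hn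
      simp only [hF'def, hQ2def, if_pos hn]
      rw [show ‖lam n • u₀ n‖ = |lam n| * ‖u₀ n‖ by
        rw [norm_smul (lam n) (u₀ n), Real.norm_eq_abs], hu1,
        abs_of_nonneg (hlamnn n), mul_one]
      rw [mul_comm (ε' : ℝ) (lam n)]
      exact mul_le_mul_of_nonneg_left hdv.le (hlamnn n)
    · simp only [hF'def, hQ2def, if_neg hn]
      simp
      positivity
  have hpqnn : ∀ n, 0 ≤ ‖p n‖ * ‖q n‖ := fun n => mul_nonneg (norm_nonneg _) (norm_nonneg _)
  have hbound_sum : Summable (fun n => ε' * lam n + badlam n) :=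
    (hsumlam.mul_left ε').add hbadsummable
  have hpqs : Summable (fun n => ‖p n‖ * ‖q n‖) :=
    Summable.of_nonneg_of_le hpqnn hpq hbound_sum
  have hPQs : Summable (fun n => ‖F' n‖ * ‖Q2 n‖) :=
    Summable.of_nonneg_of_le (fun n => mul_nonneg (norm_nonneg _) (norm_nonneg _)) hPQ
      (hsumlam.mul_left ε')
  have hparts : ∀ (x : X) (n : ℕ),
      p n x • q n + F' n x • Q2 n = f n x • y n - F' n x • Y' n := by
    intro x n
    by_cases hn : n ∈ G
    · obtain ⟨hu1, hv1, hfu, hyv⟩ := hfnorm n ((hGmem n).1 hn).1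
      simp only [hpdef, hqdef, hQ2def, hF'def, hY'def, if_pos hn]
      have hfx : f n x • y n = (lam n * u n x) • v n := by
        have hl : lam n = ‖f n‖ * ‖y n‖ := rfl
        conv_lhs => rw [hfu, hyv]
        rw [hl]
        simp only [ContinuousLinearMap.smul_apply, smul_eq_mul]
        module
      rw [hfx]
      simp only [ContinuousLinearMap.smul_apply, ContinuousLinearMap.sub_apply, smul_eq_mul]
      module
    · simp only [hpdef, hqdef, hQ2def, hF'def, hY'def, if_neg hn]
      simp
  have hsub : ∀ x, HasSum (fun n => p n x • q n + F' n x • Q2 n) ((T - T') x) := by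
    intro x
    have h1 := (hTx x).sub (hT'x x)
    have h2 : (fun n => p n x • q n + F' n x • Q2 n) =
        fun n => f n x • y n - F' n x • Y' n := funext fun n => hparts x n
    rw [h2]
    simpa [ContinuousLinearMap.sub_apply] using h1
  have hrepdiff := isNuclearRep_interleave (T - T') p F' q Q2 hpqs hPQs hsub
  refine ⟨T', hattains, _, hrepdiff, ?_⟩
  -- final numeric bound
  have h1 : (∑' n, ‖p n‖ * ‖q n‖) ≤ ε' * Λ + δ / η := by
    calc (∑' n, ‖p n‖ * ‖q n‖) ≤ ∑' n, (ε' * lam n + badlam n) :=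
          Summable.tsum_le_tsum hpq hpqs hbound_sum
      _ = ε' * Λ + ∑' n, badlam n := by
          rw [Summable.tsum_add (hsumlam.mul_left ε') hbadsummable, tsum_mul_left, ← hΛeq]
      _ ≤ ε' * Λ + δ / η := by linarith only [hbadlt]
  have h2 : (∑' n, ‖F' n‖ * ‖Q2 n‖) ≤ ε' * Λ := by
    calc (∑' n, ‖F' n‖ * ‖Q2 n‖) ≤ ∑' n, ε' * lam n :=
          Summable.tsum_le_tsum hPQ hPQs (hsumlam.mul_left ε')
      _ = ε' * Λ := by rw [tsum_mul_left, ← hΛeq]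
  have hΛub : Λ ≤ N₀ + 1 := by
    have hδ1 : δ ≤ 1 := min_le_left _ _
    linarith only [hδ1, hΛlt']
  have hΛnn : 0 ≤ Λ := by
    rw [hΛeq]
    exact tsum_nonneg hlamnn
  have hstep : ε' * Λ ≤ ε / 4 := by
    have h3 : ε' * Λ ≤ ε' * (N₀ + 1) := mul_le_mul_of_nonneg_left hΛub hε'pos.le
    have hε'le : ε' ≤ ε / (4 * (N₀ + 1)) := min_le_right _ _
    have h4 : ε' * (N₀ + 1) ≤ (ε / (4 * (N₀ + 1))) * (N₀ + 1) :=
      mul_le_mul_of_nonneg_right hε'le (by positivity)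
    have h5 : (ε / (4 * (N₀ + 1))) * (N₀ + 1) = ε / 4 := by
      field_simp
    linarith only [h3, h4, h5]
  have hδη : δ / η ≤ ε / 4 := by
    rw [div_le_iff₀ hηpos]
    have hδ2 : δ ≤ η * ε / 4 := min_le_right _ _
    linarith only [hδ2]
  linarith only [h1, h2, hstep, hδη, hε]
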